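/- Let K ⊆ ℝⁿ be a compact set and let X ⊆ K be a finite set. Suppose the vanishing ideal I(X) ⊆ ℝ[x₁,…,x_n] is generated by finitely many polynomials each of total degree at most g, and suppose every function X → ℝ is the restriction to X of a polynomial of total degree at most i. Let d ≥ max(2g, i) and let μ = Σ_{x∈X} c_x δ_x with all c_x ≥ 0. Then for every finite signed Borel measure ν on K satisfying ∫_K f dν = ∫_K f dμ for all polynomials f of total degree at most d, one has ‖ν‖_TV ≥ ‖μ‖_TV, and equality ‖ν‖_TV = ‖μ‖_TV holds only if ν = μ. In particular, μ is the unique minimizer of the total variation norm among all signed Borel measures on K with the same moments as μ up to degree d. -/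

import Mathlib

open MeasureTheory
open scoped ENNReal NNReal

noncomputable section

/-- Integration of a real function against a finite signed Borel measure,
via the Jordan decomposition `ν = ν₊ − ν₋`. -/
noncomputable def sint {α : Type*} [MeasurableSpace α] (ν : SignedMeasure α) (f : α → ℝ) : ℝ :=
  ∫ x, f x ∂ν.toJordanDecomposition.posPart - ∫ x, f x ∂ν.toJordanDecomposition.negPart

/-- The total variation norm `‖ν‖_TV = ν₊(K) + ν₋(K)` of a finite signed measure. -/
noncomputable def tvNorm {α : Type*} [MeasurableSpace α] (ν : SignedMeasure α) : ℝ :=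
  (ν.totalVariation Set.univ).toReal

lemma aux_sep {n : ℕ} (X : Finset (Fin n → ℝ)) (y : Fin n → ℝ) (hy : y ∉ X) :
    ∃ h : MvPolynomial (Fin n) ℝ,
      (∀ x ∈ X, MvPolynomial.eval x h = 0) ∧ MvPolynomial.eval y h ≠ 0 := by
  classical
  have key : ∀ x : {x // x ∈ X}, ∃ j, (x : Fin n → ℝ) j ≠ y j := by
    intro ⟨x, hx⟩
    by_contra hcon
    push_neg at hcon
    exact hy (funext hcon ▸ hx)
  choose j hj using key
  refine ⟨∏ x ∈ X.attach, (MvPolynomial.X (j x) - MvPolynomial.C ((x : Fin n → ℝ) (j x))),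
    ?_, ?_⟩
  · intro x hx
    rw [map_prod]
    exact Finset.prod_eq_zero (Finset.mem_attach X ⟨x, hx⟩) (by simp)
  · rw [map_prod, Finset.prod_ne_zero_iff]
    intro x _
    simp only [map_sub, MvPolynomial.eval_X, MvPolynomial.eval_C]
    exact sub_ne_zero.mpr (Ne.symm (hj x))

lemma aux_vm_sum_apply {α : Type*} [MeasurableSpace α] {M : Type*} [AddCommMonoid M]
    [TopologicalSpace M] [ContinuousAdd M] [T2Space M] {ι : Type*} (s : Finset ι)
    (v : ι → VectorMeasure α M) (A : Set α) :
    (∑ i ∈ s, v i) A = ∑ i ∈ s, v i A := by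
  have : ⇑(∑ i ∈ s, v i) = ∑ i ∈ s, ⇑(v i) :=
    map_sum (FunLike.coeAddMonoidHom _ _ _) v s
  rw [this, Finset.sum_apply]

lemma aux_tsm_sum {α : Type*} [MeasurableSpace α] {ι : Type*} (s : Finset ι)
    (μ : ι → Measure α) [∀ i, IsFiniteMeasure (μ i)]
    [IsFiniteMeasure (∑ i ∈ s, μ i)] :
    (∑ i ∈ s, μ i).toSignedMeasure = ∑ i ∈ s, (μ i).toSignedMeasure := by
  ext A hA
  rw [Measure.toSignedMeasure_apply_measurable hA, aux_vm_sum_apply, measureReal_def,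
    Measure.finset_sum_apply, ENNReal.toReal_sum (fun a _ => measure_ne_top _ _)]
  exact Finset.sum_congr rfl fun x _ =>
    (Measure.toSignedMeasure_apply_measurable hA).symm

lemma aux_finsum_isFinite {α : Type*} [MeasurableSpace α] {ι : Type*} (s : Finset ι)
    (μ : ι → Measure α) [∀ i, IsFiniteMeasure (μ i)] : IsFiniteMeasure (∑ i ∈ s, μ i) := by
  constructor
  rw [Measure.finset_sum_apply]
  exact ENNReal.sum_lt_top.mpr fun a _ => measure_lt_top _ _

theorem tv_unique_minimizer_of_exact_moments {n : ℕ}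
    (K : Set (Fin n → ℝ)) (hK : IsCompact K)
    (X : Finset (Fin n → ℝ)) (hXK : ↑X ⊆ K)
    (g i d : ℕ) (G : Finset (MvPolynomial (Fin n) ℝ))
    (hGvan : ∀ f ∈ G, ∀ x ∈ X, MvPolynomial.eval x f = 0)
    (hGgen : ∀ f : MvPolynomial (Fin n) ℝ, (∀ x ∈ X, MvPolynomial.eval x f = 0) →
      f ∈ Ideal.span (G : Set (MvPolynomial (Fin n) ℝ)))
    (hGdeg : ∀ f ∈ G, f.totalDegree ≤ g)
    (hinterp : ∀ v : (Fin n → ℝ) → ℝ, ∃ f : MvPolynomial (Fin n) ℝ,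
      f.totalDegree ≤ i ∧ ∀ x ∈ X, MvPolynomial.eval x f = v x)
    (hdg : 2 * g ≤ d) (hdi : i ≤ d)
    (c : (Fin n → ℝ) → ℝ) (hc : ∀ x, 0 ≤ c x) :
    ∀ ν : SignedMeasure (Fin n → ℝ), ν.totalVariation Kᶜ = 0 →
      (∀ f : MvPolynomial (Fin n) ℝ, f.totalDegree ≤ d →
        sint ν (fun x => MvPolynomial.eval x f) = ∑ x ∈ X, c x * MvPolynomial.eval x f) →
      tvNorm (∑ x ∈ X, c x • (Measure.dirac x).toSignedMeasure) ≤ tvNorm ν ∧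
        (tvNorm ν = tvNorm (∑ x ∈ X, c x • (Measure.dirac x).toSignedMeasure) →
          ν = ∑ x ∈ X, c x • (Measure.dirac x).toSignedMeasure) := by
  classical
  intro ν hν0 hmom
  set νp := ν.toJordanDecomposition.posPart with hνp
  set νn := ν.toJordanDecomposition.negPart with hνn
  haveI hfinC : IsFiniteMeasure (∑ x ∈ X, (Real.toNNReal (c x)) • Measure.dirac x) :=
    aux_finsum_isFinite _ _
  -- the signed measure μ equals the signed measure of the positive measure mC
  have hμeq : (∑ x ∈ X, c x • (Measure.dirac x).toSignedMeasure)
      = (∑ x ∈ X, (Real.toNNReal (c x)) • Measure.dirac x).toSignedMeasure := by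
    rw [aux_tsm_sum]
    exact (Finset.sum_congr rfl fun x _ => by
      rw [Measure.toSignedMeasure_smul, NNReal.smul_def, Real.coe_toNNReal _ (hc x)]).symm
  -- Jordan decomposition of μ
  let jd : JordanDecomposition (Fin n → ℝ) :=
    ⟨∑ x ∈ X, (Real.toNNReal (c x)) • Measure.dirac x, 0, Measure.MutuallySingular.zero_right⟩
  have hjd : (∑ x ∈ X, c x • (Measure.dirac x).toSignedMeasure).toJordanDecomposition = jd := by
    have h2 : jd.toSignedMeasure = ∑ x ∈ X, c x • (Measure.dirac x).toSignedMeasure := by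
      show (∑ x ∈ X, (Real.toNNReal (c x)) • Measure.dirac x).toSignedMeasure
          - (0 : Measure (Fin n → ℝ)).toSignedMeasure = _
      rw [Measure.toSignedMeasure_zero, sub_zero, hμeq]
    rw [← h2, JordanDecomposition.toJordanDecomposition_toSignedMeasure]
  -- total variation norm of μ
  have hT : tvNorm (∑ x ∈ X, c x • (Measure.dirac x).toSignedMeasure) = ∑ x ∈ X, c x := by
    unfold tvNorm SignedMeasure.totalVariation
    rw [hjd]
    show (((∑ x ∈ X, (Real.toNNReal (c x)) • Measure.dirac x)
      + (0 : Measure (Fin n → ℝ))) Set.univ).toReal = _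
    rw [add_zero, Measure.finset_sum_apply,
      ENNReal.toReal_sum (fun a _ => measure_ne_top _ _)]
    refine Finset.sum_congr rfl fun x _ => ?_
    rw [Measure.smul_apply, measure_univ, ENNReal.smul_def, smul_eq_mul, mul_one,
      ENNReal.coe_toReal, Real.coe_toNNReal _ (hc x)]
  -- moments of the constant polynomial 1
  have h1 := hmom 1 (le_trans (le_of_eq MvPolynomial.totalDegree_one) (Nat.zero_le d))
  simp only [map_one, mul_one] at h1
  unfold sint at h1
  rw [← hνp, ← hνn, integral_const, integral_const, smul_eq_mul, smul_eq_mul,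
    mul_one, mul_one, measureReal_def, measureReal_def] at h1
  -- total variation of ν
  have htv : tvNorm ν = (νp Set.univ).toReal + (νn Set.univ).toReal := by
    unfold tvNorm SignedMeasure.totalVariation
    rw [← hνp, ← hνn, Measure.add_apply,
      ENNReal.toReal_add (measure_ne_top _ _) (measure_ne_top _ _)]
  constructor
  · rw [hT, htv, ← h1]
    have := ENNReal.toReal_nonneg (a := νn Set.univ)
    linarith
  -- equality case
  intro heq
  rw [htv, hT] at heq
  have hνn0 : νn = 0 := by
    have h2 : (νn Set.univ).toReal = 0 := by linarith
    rcases (ENNReal.toReal_eq_zero_iff _).mp h2 with h | h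
    · exact Measure.measure_univ_eq_zero.mp h
    · exact absurd h (measure_ne_top _ _)
  -- ν₊ vanishes outside K
  have hνpKc : νp Kᶜ = 0 := by
    have h3 := hν0
    unfold SignedMeasure.totalVariation at h3
    rw [← hνp, ← hνn, Measure.add_apply] at h3
    exact (add_eq_zero.mp h3).1
  -- integrability of continuous functions w.r.t. ν₊
  have hint : ∀ f : (Fin n → ℝ) → ℝ, Continuous f → Integrable f νp := by
    intro f hf
    obtain ⟨C, hC⟩ := hK.exists_bound_of_continuousOn hf.continuousOn
    refine ⟨hf.aestronglyMeasurable, ?_⟩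
    apply HasFiniteIntegral.of_bounded (C := C)
    have hae : ∀ᵐ y ∂νp, y ∈ K := by
      rw [MeasureTheory.ae_iff]
      exact hνpKc
    filter_upwards [hae] with y hy using hC y hy
  -- sum of squares of the generators
  set s : MvPolynomial (Fin n) ℝ := ∑ f ∈ G, f * f with hs
  have hsdeg : s.totalDegree ≤ d := by
    refine le_trans (MvPolynomial.totalDegree_finset_sum _ _) (le_trans ?_ hdg)
    refine Finset.sup_le fun f hf => ?_
    refine le_trans (MvPolynomial.totalDegree_mul f f) ?_
    have := hGdeg f hf; omega
  have hS0 : ∀ x ∈ X, MvPolynomial.eval x s = 0 := fun x hx => by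
    rw [hs, map_sum]
    exact Finset.sum_eq_zero fun f hf => by rw [map_mul, hGvan f hf x hx, mul_zero]
  have hSnonneg : ∀ y, 0 ≤ MvPolynomial.eval y s := fun y => by
    rw [hs, map_sum]
    exact Finset.sum_nonneg fun f _ => by rw [map_mul]; exact mul_self_nonneg _
  have hmomS := hmom s hsdeg
  rw [Finset.sum_congr rfl (fun x hx => by rw [hS0 x hx, mul_zero]),
    Finset.sum_const_zero] at hmomS
  unfold sint at hmomS
  rw [← hνp, ← hνn, hνn0, integral_zero_measure, sub_zero] at hmomS
  have hcont : Continuous fun y => MvPolynomial.eval y s := MvPolynomial.continuous_eval s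
  have hae0 : (fun y => MvPolynomial.eval y s) =ᵐ[νp] 0 :=
    (integral_eq_zero_iff_of_nonneg hSnonneg (hint _ hcont)).mp hmomS
  -- ν₊ is concentrated on X
  have hXc : νp ((↑X : Set (Fin n → ℝ))ᶜ) = 0 := by
    have h4 : νp {y | ¬ (fun y => MvPolynomial.eval y s) y = (0 : (Fin n → ℝ) → ℝ) y} = 0 :=
      hae0
    refine measure_mono_null ?_ h4
    intro y hy hSy
    obtain ⟨h, hvan, hne⟩ := aux_sep X y hy
    have hker : ∀ f ∈ G, MvPolynomial.eval y f = 0 := by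
      intro f hf
      have hsum : ∑ f ∈ G, MvPolynomial.eval y f * MvPolynomial.eval y f = 0 := by
        have := hSy
        simp only [Pi.zero_apply] at this
        rw [hs, map_sum] at this
        simpa [map_mul] using this
      have := (Finset.sum_eq_zero_iff_of_nonneg
        (fun f _ => mul_self_nonneg (MvPolynomial.eval y f))).mp hsum f hf
      exact mul_self_eq_zero.mp this
    have hle : Ideal.span (↑G : Set (MvPolynomial (Fin n) ℝ))
        ≤ RingHom.ker (MvPolynomial.eval y) :=
      Ideal.span_le.mpr fun f hf => RingHom.mem_ker.mpr (hker f hf)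
    exact hne (RingHom.mem_ker.mp (hle (hGgen h hvan)))
  -- ν₊ as a sum of diracs
  have hrepr : νp = ∑ x ∈ X, νp {x} • Measure.dirac x := by
    ext A hA
    rw [Measure.finset_sum_apply]
    have hAX : νp A = νp (A ∩ ↑X) := by
      refine le_antisymm ?_ (measure_mono Set.inter_subset_left)
      calc νp A = νp ((A ∩ ↑X) ∪ (A ∩ (↑X)ᶜ)) := by rw [Set.inter_union_compl]
        _ ≤ νp (A ∩ ↑X) + νp (A ∩ (↑X)ᶜ) := measure_union_le _ _
        _ = νp (A ∩ ↑X) := by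
            rw [measure_mono_null Set.inter_subset_right hXc, add_zero]
    rw [hAX]
    have hU : (A ∩ ↑X) = ⋃ x ∈ X.filter (· ∈ A), ({x} : Set (Fin n → ℝ)) := by
      ext z
      simp only [Set.mem_inter_iff, Set.mem_iUnion, Finset.mem_filter, Set.mem_singleton_iff,
        Finset.mem_coe]
      constructor
      · rintro ⟨hzA, hzX⟩; exact ⟨z, ⟨hzX, hzA⟩, rfl⟩
      · rintro ⟨x, ⟨hxX, hxA⟩, rfl⟩; exact ⟨hxA, hxX⟩
    rw [hU, measure_biUnion_finset ?_ (fun x _ => measurableSet_singleton x)]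
    · rw [Finset.sum_filter]
      refine Finset.sum_congr rfl fun x _ => ?_
      rw [Measure.smul_apply, Measure.dirac_apply' _ hA]
      by_cases hxA : x ∈ A
      · simp [hxA, Set.indicator_of_mem]
      · simp [hxA, Set.indicator_of_notMem]
    · intro x hx y hy hxy
      simp only [Function.onFun]
      exact Set.disjoint_singleton.mpr hxy
  -- the weights of ν₊ are the c x
  have hw : ∀ x ∈ X, (νp {x}).toReal = c x := by
    intro x₀ hx₀
    obtain ⟨e, hedeg, he⟩ := hinterp (fun y => if y = x₀ then 1 else 0)
    have hm := hmom e (le_trans hedeg hdi)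
    unfold sint at hm
    rw [← hνp, ← hνn, hνn0, integral_zero_measure, sub_zero] at hm
    have hInt : ∫ y, MvPolynomial.eval y e ∂νp
        = ∑ x ∈ X, (νp {x}).toReal * MvPolynomial.eval x e := by
      conv_lhs => rw [hrepr]
      rw [integral_finset_sum_measure ?_]
      · refine Finset.sum_congr rfl fun x _ => ?_
        rw [integral_smul_measure, integral_dirac, smul_eq_mul]
      · intro x _
        refine Integrable.smul_measure ?_ (measure_ne_top _ _)
        refine ⟨(MvPolynomial.continuous_eval e).aestronglyMeasurable, ?_⟩
        refine HasFiniteIntegral.of_bounded (C := ‖MvPolynomial.eval x e‖) ?_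
        refine (ae_dirac_iff ?_).mpr le_rfl
        exact measurableSet_le
          (continuous_norm.comp (MvPolynomial.continuous_eval e)).measurable measurable_const
    rw [hInt] at hm
    have hL : ∑ x ∈ X, (νp {x}).toReal * MvPolynomial.eval x e = (νp {x₀}).toReal := by
      rw [Finset.sum_congr rfl (fun x hx => by rw [he x hx])]
      simp [mul_ite, mul_one, mul_zero, Finset.sum_ite_eq', hx₀]
    have hR : ∑ x ∈ X, c x * MvPolynomial.eval x e = c x₀ := by
      rw [Finset.sum_congr rfl (fun x hx => by rw [he x hx])]
      simp [mul_ite, mul_one, mul_zero, Finset.sum_ite_eq', hx₀]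
    rw [hL, hR] at hm
    exact hm
  -- ν₊ equals mC
  have hνp_eq : νp = ∑ x ∈ X, (Real.toNNReal (c x)) • Measure.dirac x := by
    rw [hrepr]
    refine Finset.sum_congr rfl fun x hx => ?_
    have hx1 : νp {x} = ((Real.toNNReal (c x) : ℝ≥0) : ℝ≥0∞) := by
      rw [← ENNReal.ofReal_toReal (measure_ne_top νp _), hw x hx]
      rfl
    rw [hx1]
    ext A hA
    rw [Measure.smul_apply, Measure.smul_apply, ENNReal.smul_def]
  -- conclude
  calc ν = ν.toJordanDecomposition.toSignedMeasure :=
        (ν.toSignedMeasure_toJordanDecomposition).symm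
    _ = νp.toSignedMeasure - νn.toSignedMeasure := rfl
    _ = (∑ x ∈ X, (Real.toNNReal (c x)) • Measure.dirac x).toSignedMeasure := by
        have e1 : νn.toSignedMeasure = (0 : Measure (Fin n → ℝ)).toSignedMeasure :=
          Measure.toSignedMeasure_eq_toSignedMeasure_iff.mpr hνn0
        have e2 : νp.toSignedMeasure
            = (∑ x ∈ X, (Real.toNNReal (c x)) • Measure.dirac x).toSignedMeasure :=
          Measure.toSignedMeasure_eq_toSignedMeasure_iff.mpr hνp_eq
        rw [e1, e2, Measure.toSignedMeasure_zero, sub_zero]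
    _ = ∑ x ∈ X, c x • (Measure.dirac x).toSignedMeasure := hμeq.symm
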